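/- Let β ∈ (0,1), γ ∈ (0,1), λ > 0, c ∈ (0,1), and t₀ ∈ ℝ. There exists L > 0 (depending only on β, γ, λ, c) such that for all t > t₀, ∫_{t₀}^{t} (t-s)^{-γ} e^{-λ(t-s)} (1 + (s-t₀)^{-β})^{c} ds ≤ L·(1 + (t-t₀)^{-β}). -/

import Mathlib

set_option maxHeartbeats 1000000

open MeasureTheory Set intervalIntegral

/-- `(x+y)^c ≤ x^c + y^c` for nonneg reals and `c ∈ [0,1]`. -/
lemma conv_rpow_add_le {x y c : ℝ} (hx : 0 ≤ x) (hy : 0 ≤ y) (hc : 0 ≤ c) (hc' : c ≤ 1) :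
    (x + y) ^ c ≤ x ^ c + y ^ c := by
  have h := NNReal.rpow_add_le_add_rpow x.toNNReal y.toNNReal hc hc'
  have h2 := NNReal.coe_le_coe.mpr h
  push_cast at h2
  rwa [Real.coe_toNNReal x hx, Real.coe_toNNReal y hy] at h2

/-- `x^p ≤ x^{-β} + x` when `-β ≤ p ≤ 1`, `x > 0`. -/
lemma conv_rpow_le_add {x p β : ℝ} (hx : 0 < x) (hp1 : -β ≤ p) (hp2 : p ≤ 1) :
    x ^ p ≤ x ^ (-β) + x := by
  rcases le_total x 1 with h | h
  · have := Real.rpow_le_rpow_of_exponent_ge hx h hp1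
    linarith [hx.le]
  · have h3 := Real.rpow_le_rpow_of_exponent_le h hp2
    rw [Real.rpow_one] at h3
    have := Real.rpow_nonneg (le_of_lt hx) (-β)
    linarith

/-- `(x/2)^{-r} ≤ 2 * x^{-r}` for `x > 0`, `0 ≤ r ≤ 1`. -/
lemma conv_half_rpow {x r : ℝ} (hx : 0 < x) (hr0 : 0 ≤ r) (hr1 : r ≤ 1) :
    (x / 2) ^ (-r) ≤ 2 * x ^ (-r) := by
  have h1 : (x / 2) ^ (-r) = 2 ^ r * x ^ (-r) := by
    rw [div_eq_mul_inv, Real.mul_rpow hx.le (by norm_num), Real.inv_rpow (by norm_num),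
      ← Real.rpow_neg (by norm_num), neg_neg, mul_comm]
  rw [h1]
  have h2 : (2:ℝ) ^ r ≤ 2 ^ (1:ℝ) := Real.rpow_le_rpow_of_exponent_le one_le_two hr1
  rw [Real.rpow_one] at h2
  exact mul_le_mul_of_nonneg_right h2 (Real.rpow_nonneg (by positivity) _)

/-- `x * exp(-λx) ≤ 1/λ` for `x ≥ 0`, `λ > 0`. -/
lemma conv_mul_exp_le {x lam : ℝ} (hx : 0 ≤ x) (hlam : 0 < lam) :
    x * Real.exp (-(lam * x)) ≤ 1 / lam := by
  have h1 : lam * x ≤ Real.exp (lam * x) := by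
    linarith [Real.add_one_le_exp (lam * x)]
  have hE : 0 < Real.exp (lam * x) := Real.exp_pos _
  rw [Real.exp_neg, inv_eq_one_div, mul_one_div, div_le_div_iff₀ hE hlam]
  linarith

lemma conv_aux (β γ lam c : ℝ)
    (hβ : 0 < β) (hβ' : β < 1) (hγ : 0 < γ) (hγ' : γ < 1)
    (hlam : 0 < lam) (hc : 0 < c) (hc' : c < 1) :
    ∃ L > 0, ∀ δ : ℝ, 0 < δ →
      (∫ u in (0:ℝ)..δ,
          (δ - u) ^ (-γ) * Real.exp (-lam * (δ - u)) * (1 + u ^ (-β)) ^ c)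
        ≤ L * (1 + δ ^ (-β)) := by
  set a : ℝ := β * c with ha_def
  have ha0 : 0 < a := mul_pos hβ hc
  have haβ : a < β := by nlinarith
  have ha1 : a < 1 := haβ.trans hβ'
  set F : ℝ → ℝ := fun v => v ^ (-γ) * Real.exp (-lam * v) with hF_def
  have hFmeas : Measurable F := by
    rw [hF_def]; fun_prop
  -- integrability of F on Ioi 0
  have hint : IntegrableOn F (Ioi 0) volume := by
    have h := integrableOn_rpow_mul_exp_neg_mul_rpow (p := 1) (s := -γ) (b := lam)
      (by linarith) one_pos hlam
    simpa [hF_def, Real.rpow_one] using h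
  set C₁ : ℝ := ∫ u in Ioi (0:ℝ), F u with hC₁_def
  have hC₁0 : 0 ≤ C₁ := by
    apply setIntegral_nonneg measurableSet_Ioi
    intro u hu
    exact mul_nonneg (Real.rpow_nonneg (le_of_lt hu) _) (Real.exp_pos _).le
  -- interval integrability of F on nonneg intervals
  have hFint : ∀ p q : ℝ, 0 ≤ p → p ≤ q → IntervalIntegrable F volume p q := by
    intro p q hp hpq
    exact (intervalIntegrable_iff_integrableOn_Ioc_of_le hpq).mpr
      (hint.mono_set (fun u hu => lt_of_le_of_lt hp hu.1))
  -- key: interval integrals of F are bounded by C₁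
  have key : ∀ p q : ℝ, 0 ≤ p → p ≤ q → (∫ u in p..q, F u) ≤ C₁ := by
    intro p q hp hpq
    rw [intervalIntegral.integral_of_le hpq]
    apply setIntegral_mono_set hint
    · filter_upwards [self_mem_ae_restrict measurableSet_Ioi] with u hu
      exact mul_nonneg (Real.rpow_nonneg (le_of_lt hu) _) (Real.exp_pos _).le
    · exact HasSubset.Subset.eventuallyLE (fun u hu => lt_of_le_of_lt hp hu.1)
  have hdivpos : 0 < (2 + 1/lam) / (1 - a) :=
    div_pos (by positivity) (by linarith)
  refine ⟨3 * C₁ + (2 + 1/lam) / (1 - a) + 1, by linarith, ?_⟩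
  intro δ hδ
  set x : ℝ := δ / 2 with hx_def
  have hx : 0 < x := by positivity
  have hxδ : x ≤ δ := by rw [hx_def]; linarith
  set D : ℝ := δ ^ (-β) with hD_def
  have hD : 0 < D := Real.rpow_pos_of_pos hδ _
  -- integrabilities
  have hg₁ : IntervalIntegrable (fun u => F (δ - u)) volume 0 δ := by
    have h := (hFint 0 δ le_rfl hδ.le).comp_sub_left δ
    rw [sub_zero, sub_self] at h
    exact h.symm
  have hg₁' : IntervalIntegrable (fun u => F (δ - u)) volume x δ := by
    have h := (hFint 0 x le_rfl hx.le).comp_sub_left δ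
    rw [sub_zero, show δ - x = x by rw [hx_def]; ring] at h
    exact h.symm
  have hg₂a : IntervalIntegrable (fun u => F (δ - u) * u ^ (-a)) volume 0 x := by
    apply IntervalIntegrable.mono_fun
      ((intervalIntegrable_rpow' (by linarith : (-1:ℝ) < -a)).const_mul
        (x ^ (-γ) * Real.exp (-lam * x)))
    · exact ((hFmeas.comp (measurable_const.sub measurable_id)).mul
        (by fun_prop : Measurable fun u : ℝ => u ^ (-a))).aestronglyMeasurable
    · filter_upwards [self_mem_ae_restrict measurableSet_uIoc] with u hu
      rw [uIoc_of_le hx.le] at hu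
      obtain ⟨hu1, hu2⟩ := hu
      have hδu : x ≤ δ - u := by rw [hx_def] at *; linarith
      have hF1 : F (δ - u) ≤ x ^ (-γ) * Real.exp (-lam * x) := by
        apply mul_le_mul
        · exact Real.rpow_le_rpow_of_nonpos hx hδu (by linarith)
        · exact Real.exp_le_exp.mpr (by nlinarith)
        · exact (Real.exp_pos _).le
        · exact Real.rpow_nonneg hx.le _
      have hF0 : 0 ≤ F (δ - u) :=
        mul_nonneg (Real.rpow_nonneg (by linarith) _) (Real.exp_pos _).le
      have hu0 : (0:ℝ) ≤ u ^ (-a) := Real.rpow_nonneg hu1.le _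
      rw [Real.norm_eq_abs, Real.norm_eq_abs, abs_of_nonneg (mul_nonneg hF0 hu0),
        abs_of_nonneg (mul_nonneg (by positivity) hu0)]
      exact mul_le_mul_of_nonneg_right hF1 hu0
  have hg₂b : IntervalIntegrable (fun u => F (δ - u) * u ^ (-a)) volume x δ := by
    apply IntervalIntegrable.mono_fun (hg₁'.const_mul (x ^ (-a)))
    · exact ((hFmeas.comp (measurable_const.sub measurable_id)).mul
        (by fun_prop : Measurable fun u : ℝ => u ^ (-a))).aestronglyMeasurable
    · filter_upwards [self_mem_ae_restrict measurableSet_uIoc] with u hu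
      rw [uIoc_of_le hxδ] at hu
      obtain ⟨hu1, hu2⟩ := hu
      have hF0 : 0 ≤ F (δ - u) :=
        mul_nonneg (Real.rpow_nonneg (by linarith) _) (Real.exp_pos _).le
      have hua : u ^ (-a) ≤ x ^ (-a) :=
        Real.rpow_le_rpow_of_nonpos hx hu1.le (by linarith)
      rw [Real.norm_eq_abs, Real.norm_eq_abs,
        abs_of_nonneg (mul_nonneg hF0 (Real.rpow_nonneg (by linarith) _)),
        abs_of_nonneg (mul_nonneg (Real.rpow_nonneg hx.le _) hF0)]
      calc F (δ - u) * u ^ (-a) ≤ F (δ - u) * x ^ (-a) :=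
            mul_le_mul_of_nonneg_left hua hF0
        _ = x ^ (-a) * F (δ - u) := by ring
  have hg₂ : IntervalIntegrable (fun u => F (δ - u) * u ^ (-a)) volume 0 δ :=
    hg₂a.trans hg₂b
  have hg : IntervalIntegrable (fun u => F (δ - u) + F (δ - u) * u ^ (-a)) volume 0 δ :=
    hg₁.add hg₂
  -- pointwise bound
  have hpw : ∀ u ∈ Icc (0:ℝ) δ,
      (δ - u) ^ (-γ) * Real.exp (-lam * (δ - u)) * (1 + u ^ (-β)) ^ c
        ≤ F (δ - u) + F (δ - u) * u ^ (-a) := by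
    intro u hu
    obtain ⟨hu1, hu2⟩ := hu
    have hF0 : 0 ≤ F (δ - u) :=
      mul_nonneg (Real.rpow_nonneg (by linarith) _) (Real.exp_pos _).le
    have h1 : (1 + u ^ (-β)) ^ c ≤ 1 + u ^ (-a) := by
      calc (1 + u ^ (-β)) ^ c ≤ 1 ^ c + (u ^ (-β)) ^ c :=
            conv_rpow_add_le (by norm_num) (Real.rpow_nonneg hu1 _) hc.le hc'.le
        _ = 1 + u ^ (-a) := by
            rw [Real.one_rpow, ← Real.rpow_mul hu1, neg_mul, ← ha_def]
    calc (δ - u) ^ (-γ) * Real.exp (-lam * (δ - u)) * (1 + u ^ (-β)) ^ c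
        = F (δ - u) * (1 + u ^ (-β)) ^ c := rfl
      _ ≤ F (δ - u) * (1 + u ^ (-a)) := mul_le_mul_of_nonneg_left h1 hF0
      _ = F (δ - u) + F (δ - u) * u ^ (-a) := by ring
  -- integrability of the integrand
  have hf : IntervalIntegrable
      (fun u => (δ - u) ^ (-γ) * Real.exp (-lam * (δ - u)) * (1 + u ^ (-β)) ^ c)
      volume 0 δ := by
    apply IntervalIntegrable.mono_fun hg
    · exact ((hFmeas.comp (measurable_const.sub measurable_id)).mul
        (by fun_prop : Measurable fun u : ℝ => (1 + u ^ (-β)) ^ c)).aestronglyMeasurable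
    · filter_upwards [self_mem_ae_restrict measurableSet_uIoc] with u hu
      rw [uIoc_of_le hδ.le] at hu
      have hu' : u ∈ Icc (0:ℝ) δ := ⟨hu.1.le, hu.2⟩
      have h := hpw u hu'
      have hf0 : (0:ℝ) ≤ (δ - u) ^ (-γ) * Real.exp (-lam * (δ - u)) * (1 + u ^ (-β)) ^ c := by
        apply mul_nonneg
        · exact mul_nonneg (Real.rpow_nonneg (by linarith [hu'.2]) _) (Real.exp_pos _).le
        · exact Real.rpow_nonneg (by linarith [Real.rpow_nonneg hu'.1 (-β)]) _
      rw [Real.norm_eq_abs, Real.norm_eq_abs, abs_of_nonneg hf0, abs_of_nonneg (le_trans hf0 h)]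
      exact h
  -- step 3-9
  have hI1 : (∫ u in (0:ℝ)..δ, F (δ - u)) ≤ C₁ := by
    rw [intervalIntegral.integral_comp_sub_left F δ, sub_self, sub_zero]
    exact key 0 δ le_rfl hδ.le
  have hI2a : (∫ u in (0:ℝ)..x, F (δ - u) * u ^ (-a))
      ≤ x ^ (-γ) * Real.exp (-lam * x) * (x ^ (-a + 1) / (-a + 1)) := by
    have hmono : (∫ u in (0:ℝ)..x, F (δ - u) * u ^ (-a))
        ≤ ∫ u in (0:ℝ)..x, (x ^ (-γ) * Real.exp (-lam * x)) * u ^ (-a) := by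
      apply intervalIntegral.integral_mono_on hx.le hg₂a
        ((intervalIntegrable_rpow' (by linarith : (-1:ℝ) < -a)).const_mul _)
      intro u hu
      obtain ⟨hu1, hu2⟩ := hu
      have hδu : x ≤ δ - u := by rw [hx_def] at *; linarith
      have hF1 : F (δ - u) ≤ x ^ (-γ) * Real.exp (-lam * x) := by
        apply mul_le_mul
        · exact Real.rpow_le_rpow_of_nonpos hx hδu (by linarith)
        · exact Real.exp_le_exp.mpr (by nlinarith)
        · exact (Real.exp_pos _).le
        · exact Real.rpow_nonneg hx.le _
      exact mul_le_mul_of_nonneg_right hF1 (Real.rpow_nonneg hu1 _)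
    calc (∫ u in (0:ℝ)..x, F (δ - u) * u ^ (-a)) ≤ _ := hmono
      _ = (x ^ (-γ) * Real.exp (-lam * x)) * ∫ u in (0:ℝ)..x, u ^ (-a) :=
          intervalIntegral.integral_const_mul _ _
      _ = x ^ (-γ) * Real.exp (-lam * x) * (x ^ (-a + 1) / (-a + 1)) := by
          rw [integral_rpow (Or.inl (by linarith : (-1:ℝ) < -a)),
            Real.zero_rpow (by linarith : (-a + 1) ≠ 0)]
          ring
  have hI2b : (∫ u in x..δ, F (δ - u) * u ^ (-a)) ≤ x ^ (-a) * C₁ := by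
    have hmono : (∫ u in x..δ, F (δ - u) * u ^ (-a))
        ≤ ∫ u in x..δ, x ^ (-a) * F (δ - u) := by
      apply intervalIntegral.integral_mono_on hxδ hg₂b (hg₁'.const_mul _)
      intro u hu
      obtain ⟨hu1, hu2⟩ := hu
      have hF0 : 0 ≤ F (δ - u) :=
        mul_nonneg (Real.rpow_nonneg (by linarith) _) (Real.exp_pos _).le
      have hua : u ^ (-a) ≤ x ^ (-a) :=
        Real.rpow_le_rpow_of_nonpos hx hu1 (by linarith)
      calc F (δ - u) * u ^ (-a) ≤ F (δ - u) * x ^ (-a) :=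
            mul_le_mul_of_nonneg_left hua hF0
        _ = x ^ (-a) * F (δ - u) := by ring
    have hsub : (∫ u in x..δ, F (δ - u)) = ∫ u in (0:ℝ)..x, F u := by
      rw [intervalIntegral.integral_comp_sub_left F δ, sub_self,
        show δ - x = x by rw [hx_def]; ring]
    calc (∫ u in x..δ, F (δ - u) * u ^ (-a)) ≤ _ := hmono
      _ = x ^ (-a) * ∫ u in x..δ, F (δ - u) := intervalIntegral.integral_const_mul _ _
      _ ≤ x ^ (-a) * C₁ := by
          rw [hsub]
          exact mul_le_mul_of_nonneg_left (key 0 x le_rfl hx.le) (Real.rpow_nonneg hx.le _)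
  -- arithmetic bounds
  have haD : δ ^ (-a) ≤ 1 + D := by
    rcases le_total δ 1 with h | h
    · have h1 := Real.rpow_le_rpow_of_exponent_ge hδ h (neg_le_neg haβ.le)
      rw [← hD_def] at h1
      linarith
    · have h0 := Real.rpow_le_rpow_of_exponent_le h (by linarith : -a ≤ 0)
      rw [Real.rpow_zero] at h0
      linarith
  have hterm2 : x ^ (-γ) * Real.exp (-lam * x) * (x ^ (-a + 1) / (-a + 1))
      ≤ (2 + 1/lam) / (1 - a) * (1 + D) := by
    set E : ℝ := Real.exp (-lam * x) with hE_def
    have hE1 : E ≤ 1 := Real.exp_le_one_iff.mpr (by nlinarith)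
    have hE0 : 0 < E := Real.exp_pos _
    have hxe : x * E ≤ 1/lam := by
      have h := conv_mul_exp_le hx.le hlam
      rw [← neg_mul] at h
      rw [hE_def]
      exact h
    have hxβ : x ^ (-β) ≤ 2 * D := by
      have h2 := conv_half_rpow hδ hβ.le hβ'.le
      rw [← hx_def, ← hD_def] at h2
      exact h2
    have hp : x ^ ((1:ℝ) - γ - a) ≤ x ^ (-β) + x :=
      conv_rpow_le_add hx (by linarith) (by linarith)
    have hnum : x ^ ((1:ℝ) - γ - a) * E ≤ (2 + 1/lam) * (1 + D) := by
      have e1 : x ^ ((1:ℝ) - γ - a) * E ≤ (x ^ (-β) + x) * E :=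
        mul_le_mul_of_nonneg_right hp hE0.le
      have e3 : x ^ (-β) * E ≤ x ^ (-β) :=
        mul_le_of_le_one_right (Real.rpow_nonneg hx.le _) hE1
      nlinarith [mul_pos hD (by positivity : (0:ℝ) < 1/lam)]
    calc x ^ (-γ) * E * (x ^ (-a + 1) / (-a + 1))
        = (x ^ (-γ) * x ^ (-a + 1)) * E / (-a + 1) := by ring
      _ = x ^ ((1:ℝ) - γ - a) * E / (1 - a) := by
          rw [← Real.rpow_add hx, show -γ + (-a + 1) = (1:ℝ) - γ - a by ring,
            show -a + 1 = 1 - a by ring]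
      _ ≤ ((2 + 1/lam) * (1 + D)) / (1 - a) := by
          rw [div_eq_mul_inv, div_eq_mul_inv]
          exact mul_le_mul_of_nonneg_right hnum (inv_nonneg.mpr (by linarith))
      _ = (2 + 1/lam) / (1 - a) * (1 + D) := by ring
  have hterm3 : x ^ (-a) * C₁ ≤ 2 * C₁ * (1 + D) := by
    have h2 := conv_half_rpow hδ ha0.le ha1.le
    rw [← hx_def] at h2
    have hxa : x ^ (-a) ≤ 2 * (1 + D) := by nlinarith
    nlinarith [Real.rpow_nonneg hx.le (-a)]
  have hC1b : C₁ ≤ C₁ * (1 + D) := by nlinarith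
  calc (∫ u in (0:ℝ)..δ,
          (δ - u) ^ (-γ) * Real.exp (-lam * (δ - u)) * (1 + u ^ (-β)) ^ c)
      ≤ ∫ u in (0:ℝ)..δ, (F (δ - u) + F (δ - u) * u ^ (-a)) :=
        intervalIntegral.integral_mono_on hδ.le hf hg hpw
    _ = (∫ u in (0:ℝ)..δ, F (δ - u)) + ∫ u in (0:ℝ)..δ, F (δ - u) * u ^ (-a) :=
        intervalIntegral.integral_add hg₁ hg₂
    _ = (∫ u in (0:ℝ)..δ, F (δ - u))
        + ((∫ u in (0:ℝ)..x, F (δ - u) * u ^ (-a))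
          + ∫ u in x..δ, F (δ - u) * u ^ (-a)) := by
        rw [intervalIntegral.integral_add_adjacent_intervals hg₂a hg₂b]
    _ ≤ C₁ + (x ^ (-γ) * Real.exp (-lam * x) * (x ^ (-a + 1) / (-a + 1))
          + x ^ (-a) * C₁) :=
        add_le_add hI1 (add_le_add hI2a hI2b)
    _ ≤ C₁ * (1 + D) + ((2 + 1/lam) / (1 - a) * (1 + D) + 2 * C₁ * (1 + D)) :=
        add_le_add hC1b (add_le_add hterm2 hterm3)
    _ ≤ (3 * C₁ + (2 + 1/lam) / (1 - a) + 1) * (1 + D) := by nlinarith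

theorem convolution_bound (β γ lam c t₀ : ℝ)
    (hβ : 0 < β) (hβ' : β < 1) (hγ : 0 < γ) (hγ' : γ < 1)
    (hlam : 0 < lam) (hc : 0 < c) (hc' : c < 1) :
    ∃ L > 0, ∀ t > t₀,
      ∫ s in t₀..t,
          (t - s) ^ (-γ) * Real.exp (-lam * (t - s)) * (1 + (s - t₀) ^ (-β)) ^ c
        ≤ L * (1 + (t - t₀) ^ (-β)) := by
  obtain ⟨L, hL, hbound⟩ := conv_aux β γ lam c hβ hβ' hγ hγ' hlam hc hc'
  refine ⟨L, hL, ?_⟩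
  intro t ht
  have h1 : (∫ s in t₀..t,
        (t - s) ^ (-γ) * Real.exp (-lam * (t - s)) * (1 + (s - t₀) ^ (-β)) ^ c)
      = ∫ u in (0:ℝ)..(t - t₀),
        ((t - t₀) - u) ^ (-γ) * Real.exp (-lam * ((t - t₀) - u)) * (1 + u ^ (-β)) ^ c := by
    have h := intervalIntegral.integral_comp_sub_right
      (fun u => ((t - t₀) - u) ^ (-γ) * Real.exp (-lam * ((t - t₀) - u)) * (1 + u ^ (-β)) ^ c)
      t₀ (a := t₀) (b := t)
    rw [sub_self] at h
    rw [← h]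
    apply intervalIntegral.integral_congr
    intro s _
    simp only
    rw [show (t - t₀) - (s - t₀) = t - s by ring]
  rw [h1]
  exact hbound (t - t₀) (by linarith)
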